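/- Let ρ ∈ (0,1) satisfy 4ρ³ - 7ρ² + 5ρ - 1 = 0 and set a = (5-13ρ+7ρ²)/(11-35ρ+41ρ²), b = (3-11ρ+17ρ²)/(11-35ρ+41ρ²). Then for every integer k ≥ 1, ∑_{j=1}^∞ (k+j-1)ρ^j(aj+b) = ak+b. -/

import Mathlib

/-- For ρ ∈ (0,1) with 4ρ³-7ρ²+5ρ-1 = 0 and a, b as given, for every k ≥ 1,
∑_{j≥1} (k+j-1)ρ^j(aj+b) = ak+b. -/
theorem cc_C2_fixed_point (ρ : ℝ) (hρ0 : 0 < ρ) (hρ1 : ρ < 1)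
    (hroot : 4 * ρ^3 - 7 * ρ^2 + 5 * ρ - 1 = 0) :
    let a : ℝ := (5 - 13*ρ + 7*ρ^2) / (11 - 35*ρ + 41*ρ^2)
    let b : ℝ := (3 - 11*ρ + 17*ρ^2) / (11 - 35*ρ + 41*ρ^2)
    ∀ k : ℕ, 1 ≤ k →
      HasSum (fun j : ℕ =>
          ((k : ℝ) + ((j + 1 : ℕ) : ℝ) - 1) * ρ ^ (j + 1) * (a * ((j + 1 : ℕ) : ℝ) + b))
        (a * (k : ℝ) + b) := by
  intro a b k hk
  have hD : (11 - 35*ρ + 41*ρ^2 : ℝ) ≠ 0 := by nlinarith [sq_nonneg (ρ - 35/82)]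
  have h1ρ : (1 : ℝ) - ρ ≠ 0 := by linarith
  have hr : ‖ρ‖ < 1 := by rw [Real.norm_eq_abs, abs_of_pos hρ0]; exact hρ1
  have h0 := hasSum_choose_mul_geometric_of_norm_lt_one (𝕜 := ℝ) 0 hr
  have h1 := hasSum_choose_mul_geometric_of_norm_lt_one (𝕜 := ℝ) 1 hr
  have h2 := hasSum_choose_mul_geometric_of_norm_lt_one (𝕜 := ℝ) 2 hr
  have key := ((h2.mul_left (ρ * (2*a))).add
      (h1.mul_left (ρ * (a*(k:ℝ) - 2*a + b)))).add
      (h0.mul_left (ρ * (b*((k:ℝ)-1))))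
  have hc : ∀ n : ℕ, ((n+2).choose 2 : ℝ) = ((n:ℝ)+1)*((n:ℝ)+2)/2 := by
    intro n
    rw [Nat.choose_two_right]
    have hdvd : 2 ∣ (n+2) * (n+2-1) := by
      simpa [Nat.mul_comm] using (Nat.even_mul_succ_self (n+1)).two_dvd
    rw [Nat.cast_div hdvd (by norm_num)]
    push_cast
    ring
  have hfun : (fun j : ℕ =>
          ((k : ℝ) + ((j + 1 : ℕ) : ℝ) - 1) * ρ ^ (j + 1) * (a * ((j + 1 : ℕ) : ℝ) + b))
      = fun n : ℕ => ρ * (2*a) * (((n+2).choose 2 : ℝ) * ρ ^ n)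
          + ρ * (a*(k:ℝ) - 2*a + b) * (((n+1).choose 1 : ℝ) * ρ ^ n)
          + ρ * (b*((k:ℝ)-1)) * (((n+0).choose 0 : ℝ) * ρ ^ n) := by
    funext n
    rw [hc n, Nat.choose_one_right, Nat.choose_zero_right]
    push_cast
    ring
  have hval : a * (k:ℝ) + b
      = ρ * (2*a) * (1 / (1-ρ)^(2+1)) + ρ * (a*(k:ℝ) - 2*a + b) * (1 / (1-ρ)^(1+1))
        + ρ * (b*((k:ℝ)-1)) * (1 / (1-ρ)^(0+1)) := by
    simp only [a, b]
    field_simp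
    rw [div_left_inj' (show (11 - ρ * 35 + ρ ^ 2 * 41 : ℝ) ≠ 0 by contrapose! hD; linarith)]
    linear_combination ((-3:ℝ) + 14*ρ - 24*ρ^2 + 18*ρ^3 - 5*ρ^4 + (k:ℝ)*(-5 + 26*ρ - 54*ρ^2 + 56*ρ^3 - 29*ρ^4 + 6*ρ^5)) * hroot
  rw [hfun, hval]
  exact key
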